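/- In dimension $n = 1$, let $f(w) = |w|^{1/3}$ and $g(w) = |w|^4$ on $\mathbb{C} \simeq \mathbb{R}^2$. Then for all $z \ne 0$: (i) $\partial^2_{z\overline{z}} f(z) \cdot \partial^2_{z\overline{z}} g(z) \ge 0$ (in fact both factors are nonnegative since $f, g$ are subharmonic), but (ii) $\mathrm{Tr}\big((D^2 f)(z)(D^2 g)(z)\big) = -\frac{4}{3}|z|^{1/3} \le 0$, where $D^2$ denotes the real Hessian on $\mathbb{R}^2$. -/

import Mathlib

open MeasureTheory Complex

/-- Second real derivative (Hessian as bilinear form) of `h : ℂ → ℝ` in directions `u, v`. -/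
noncomputable def H2 (h : ℂ → ℝ) (u v : ℂ) (z : ℂ) : ℝ :=
  fderiv ℝ (fun w => fderiv ℝ h w v) z u

noncomputable def Lz (z : ℂ) : ℂ →L[ℝ] ℝ := (2*z.re) • reCLM + (2*z.im) • imCLM

lemma Lz_apply (z w : ℂ) : Lz z w = 2*z.re*w.re + 2*z.im*w.im := by
  simp [Lz]

lemma hasFDerivAt_normSq' (z : ℂ) : HasFDerivAt (fun w => Complex.normSq w) (Lz z) z := by
  have h : (fun w => Complex.normSq w) = fun w : ℂ => (reCLM w) * (reCLM w) + (imCLM w) * (imCLM w) := by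
    funext w; simp [Complex.normSq_apply]
  rw [h]
  have := ((reCLM.hasFDerivAt (x := z)).mul (reCLM.hasFDerivAt (x := z))).add
    ((imCLM.hasFDerivAt (x := z)).mul (imCLM.hasFDerivAt (x := z)))
  refine this.congr_fderiv ?_
  ext w
  simp [Lz]
  ring

lemma hasFDerivAt_rpow_normSq (c : ℝ) {z : ℂ} (hz : z ≠ 0) :
    HasFDerivAt (fun w => Complex.normSq w ^ c)
      ((c * Complex.normSq z ^ (c-1)) • Lz z) z := by
  have hN : Complex.normSq z ≠ 0 := fun h => hz (Complex.normSq_eq_zero.mp h)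
  exact (Real.hasDerivAt_rpow_const (Or.inl hN)).comp_hasFDerivAt z (hasFDerivAt_normSq' z)

lemma fderiv_rpow_normSq (c : ℝ) {z : ℂ} (hz : z ≠ 0) (v : ℂ) :
    fderiv ℝ (fun w => Complex.normSq w ^ c) z v
      = c * Complex.normSq z ^ (c-1) * (2*z.re*v.re + 2*z.im*v.im) := by
  rw [(hasFDerivAt_rpow_normSq c hz).fderiv]
  simp [Lz_apply]

lemma H2_rpow (c : ℝ) (u v : ℂ) {z : ℂ} (hz : z ≠ 0) :
    H2 (fun w => Complex.normSq w ^ c) u v z =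
      c * ((c-1) * Complex.normSq z ^ (c-2) * (2*z.re*u.re+2*z.im*u.im) * (2*z.re*v.re+2*z.im*v.im)
        + Complex.normSq z ^ (c-1) * (2*u.re*v.re+2*u.im*v.im)) := by
  have hev : (fun w => fderiv ℝ (fun w => Complex.normSq w ^ c) w v) =ᶠ[nhds z]
      (fun w => c * (Complex.normSq w ^ (c-1) * (2*w.re*v.re + 2*w.im*v.im))) := by
    filter_upwards [isOpen_ne.mem_nhds hz] with w hw
    rw [fderiv_rpow_normSq c hw v]; ring
  unfold H2
  rw [hev.fderiv_eq]
  have h1 : HasFDerivAt (fun w => Complex.normSq w ^ (c-1))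
      (((c-1) * Complex.normSq z ^ (c-1-1)) • Lz z) z := hasFDerivAt_rpow_normSq (c-1) hz
  have h2 : HasFDerivAt (fun w : ℂ => 2*w.re*v.re + 2*w.im*v.im) (Lz v) z := by
    have : (fun w : ℂ => 2*w.re*v.re + 2*w.im*v.im) = fun w => Lz v w := by
      funext w; rw [Lz_apply]; ring
    rw [this]; exact (Lz v).hasFDerivAt
  have hmul := (h1.mul h2).const_mul c
  rw [HasFDerivAt.fderiv (f := fun w => c * (Complex.normSq w ^ (c-1) * (2*w.re*v.re + 2*w.im*v.im))) hmul]
  have he : c - 1 - 1 = c - 2 := by ring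
  simp [Lz_apply, he]
  ring

lemma f_eq : (fun w : ℂ => ‖w‖ ^ ((1:ℝ)/3)) = fun w => Complex.normSq w ^ ((1:ℝ)/6) := by
  funext w
  rw [Complex.norm_def, Real.sqrt_eq_rpow, ← Real.rpow_mul (Complex.normSq_nonneg w)]
  norm_num

lemma g_eq : (fun w : ℂ => ‖w‖ ^ (4:ℕ)) = fun w => Complex.normSq w ^ ((2:ℝ)) := by
  funext w
  rw [show (4:ℕ) = 2*2 from rfl, pow_mul, Complex.sq_norm, ← Real.rpow_natCast (Complex.normSq w) 2]
  norm_num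

theorem real_vs_complex_hessian_example :
    ∀ z : ℂ, z ≠ 0 →
      (0 ≤ (1/4) * (H2 (fun w => ‖w‖ ^ ((1:ℝ)/3)) 1 1 z
            + H2 (fun w => ‖w‖ ^ ((1:ℝ)/3)) Complex.I Complex.I z)) ∧
      (0 ≤ (1/4) * (H2 (fun w => ‖w‖ ^ (4:ℕ)) 1 1 z
            + H2 (fun w => ‖w‖ ^ (4:ℕ)) Complex.I Complex.I z)) ∧
      (0 ≤ ((1/4) * (H2 (fun w => ‖w‖ ^ ((1:ℝ)/3)) 1 1 z
            + H2 (fun w => ‖w‖ ^ ((1:ℝ)/3)) Complex.I Complex.I z)) *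
          ((1/4) * (H2 (fun w => ‖w‖ ^ (4:ℕ)) 1 1 z
            + H2 (fun w => ‖w‖ ^ (4:ℕ)) Complex.I Complex.I z))) ∧
      (H2 (fun w => ‖w‖ ^ ((1:ℝ)/3)) 1 1 z * H2 (fun w => ‖w‖ ^ (4:ℕ)) 1 1 z
        + H2 (fun w => ‖w‖ ^ ((1:ℝ)/3)) 1 Complex.I z
            * H2 (fun w => ‖w‖ ^ (4:ℕ)) Complex.I 1 z
        + H2 (fun w => ‖w‖ ^ ((1:ℝ)/3)) Complex.I 1 z
            * H2 (fun w => ‖w‖ ^ (4:ℕ)) 1 Complex.I z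
        + H2 (fun w => ‖w‖ ^ ((1:ℝ)/3)) Complex.I Complex.I z
            * H2 (fun w => ‖w‖ ^ (4:ℕ)) Complex.I Complex.I z
        = -(4/3) * ‖z‖ ^ ((1:ℝ)/3)) := by
  intro z hz
  have habs : ‖z‖ ^ ((1:ℝ)/3) = Complex.normSq z ^ ((1:ℝ)/6) := congrFun f_eq z
  rw [f_eq, g_eq, habs]
  have hNpos : 0 < Complex.normSq z := Complex.normSq_pos.mpr hz
  set N := Complex.normSq z with hNdef
  set x := z.re with hxdef
  set y := z.im with hydef
  have hxy : x*x + y*y = N := (Complex.normSq_apply z).symm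
  set s : ℝ := N ^ ((1:ℝ)/6 - 2) with hsdef
  have hs : 0 ≤ s := Real.rpow_nonneg hNpos.le _
  have hA : N ^ ((1:ℝ)/6 - 1) = s * N := by
    rw [show (1:ℝ)/6 - 1 = ((1:ℝ)/6-2)+1 by ring, Real.rpow_add hNpos, Real.rpow_one, ← hsdef]
  have hB : N ^ ((1:ℝ)/6) = s * N * N := by
    rw [show (1:ℝ)/6 = ((1:ℝ)/6-2)+1+1 by ring, Real.rpow_add hNpos, Real.rpow_add hNpos,
      Real.rpow_one, ← hsdef]
  have F := fun (u v : ℂ) => H2_rpow ((1:ℝ)/6) u v hz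
  have G := fun (u v : ℂ) => H2_rpow (2:ℝ) u v hz
  rw [F 1 1, F I I, F 1 I, F I 1, G 1 1, G I I, G 1 I, G I 1]
  simp only [Complex.one_re, Complex.one_im, Complex.I_re, Complex.I_im]
  rw [show (2:ℝ)-2 = 0 by norm_num, show (2:ℝ)-1 = 1 by norm_num, Real.rpow_zero,
    Real.rpow_one, hA, hB]
  have hsxy : s*(x*x+y*y) = s*N := by rw [hxy]
  have hsN : 0 ≤ s*N := mul_nonneg hs hNpos.le
  refine ⟨by nlinarith [hsxy, hsN], by nlinarith [hxy, hNpos.le], ?_, ?_⟩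
  · apply mul_nonneg
    · nlinarith [hsxy, hsN]
    · nlinarith [hxy, hNpos.le]
  · linear_combination (s * (-(40:ℝ)/9 * (x*x+y*y) - 4*N)) * hxy
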